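/- Let f_c > 0, n ≥ 1, and let (x₁, y₁), …, (xₙ, yₙ) ∈ ℝ² be paired data samples. Write s^x_{ij} = sinc_{f_c}(x_i − x_j) and s^y_{ij} = sinc_{f_c}(y_i − y_j). Suppose a ∈ ℝⁿ has all entries nonzero and satisfies the two-dimensional BLML constraints Σ_{j=1}^n a_j s^x_{ij} s^y_{ij} = n / a_i for every i. Then the joint BLML estimator f̂_{XY}(x,y) = ((1/n) Σ_{i=1}^n a_i sinc_{f_c}(x − x_i) sinc_{f_c}(y − y_i))² is a probability density on ℝ²: ∫∫_{ℝ²} f̂_{XY}(x,y) dx dy = 1. -/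

import Mathlib

open MeasureTheory

/-- The band-limited sinc kernel with cutoff frequency `fc`. -/
noncomputable def sincF (fc : ℝ) (x : ℝ) : ℝ :=
  if x = 0 then fc else Real.sin (Real.pi * fc * x) / (Real.pi * x)

open Real Complex intervalIntegral
open scoped FourierTransform

lemma sincF_even (c x : ℝ) : sincF c (-x) = sincF c x := by
  unfold sincF
  rcases eq_or_ne x 0 with h | h
  · simp [h]
  · rw [if_neg (neg_ne_zero.2 h), if_neg h]
    rw [mul_neg, Real.sin_neg, mul_neg, neg_div_neg_eq]

lemma cexp_integral_eq_sincF (c : ℝ) (hc : 0 < c) (s : ℝ) :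
    (∫ η in (-(c/2))..(c/2), Complex.exp (2 * Real.pi * Complex.I * η * s))
      = (sincF c s : ℂ) := by
  rcases eq_or_ne s 0 with hs | hs
  · simp [hs, sincF]
  · have hk : (2 * Real.pi * Complex.I * s) ≠ 0 := by
      simp [Real.pi_ne_zero, Complex.I_ne_zero, Complex.ofReal_ne_zero.2 hs]
    have : (fun η : ℝ => Complex.exp (2 * Real.pi * Complex.I * η * s))
        = fun η : ℝ => Complex.exp ((2 * Real.pi * Complex.I * s) * η) := by
      ext η; ring_nf
    rw [this, integral_exp_mul_complex hk]
    rw [sincF, if_neg hs]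
    have h1 : (2 * Real.pi * Complex.I * s) * (c/2 : ℝ) = (Real.pi * s * c : ℝ) * Complex.I := by
      push_cast; ring
    have h2 : (2 * Real.pi * Complex.I * s) * (-(c/2) : ℝ) = -((Real.pi * s * c : ℝ) * Complex.I) := by
      push_cast; ring
    rw [h1, h2]
    have hsin : Complex.exp ((Real.pi * s * c : ℝ) * Complex.I)
        - Complex.exp (-((Real.pi * s * c : ℝ) * Complex.I))
        = 2 * Complex.I * Real.sin (Real.pi * s * c) := by
      rw [show -((Real.pi * s * c : ℝ) * Complex.I) = ((-(Real.pi * s * c) : ℝ)) * Complex.I by push_cast; ring,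
        Complex.exp_mul_I, Complex.exp_mul_I]
      push_cast [Complex.cos_neg, Complex.sin_neg, Complex.ofReal_sin]
      ring
    rw [hsin]
    rw [div_eq_iff hk]
    push_cast [Complex.ofReal_sin]
    have hps : (Real.pi : ℂ) * s ≠ 0 := by
      simp [Real.pi_ne_zero, Complex.ofReal_ne_zero.2 hs]
    field_simp
    rw [eq_div_iff (Complex.ofReal_ne_zero.2 hs)]
    ring

lemma continuous_sincF (c : ℝ) : Continuous (sincF c) := by
  rw [continuous_iff_continuousAt]
  intro x
  rcases eq_or_ne x 0 with rfl | hx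
  · have hslope : Filter.Tendsto (fun y : ℝ => Real.sin (Real.pi * c * y) / y)
        (nhdsWithin 0 {(0:ℝ)}ᶜ) (nhds (Real.pi * c)) := by
      have hd : HasDerivAt (fun y : ℝ => Real.sin (Real.pi * c * y)) (Real.pi * c) 0 := by
        have := (Real.hasDerivAt_sin (Real.pi * c * 0)).comp 0
          ((hasDerivAt_id 0).const_mul (Real.pi * c))
        simpa [Function.comp_def] using this
      have := hasDerivAt_iff_tendsto_slope.mp hd
      refine this.congr' ?_
      filter_upwards [self_mem_nhdsWithin] with y hy
      simp [slope_def_field]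
    have h2 : Filter.Tendsto (sincF c) (nhdsWithin 0 {(0:ℝ)}ᶜ) (nhds c) := by
      have h3 : Filter.Tendsto (fun y : ℝ => Real.sin (Real.pi * c * y) / y / Real.pi)
          (nhdsWithin 0 {(0:ℝ)}ᶜ) (nhds (Real.pi * c / Real.pi)) := hslope.div_const _
      have hval : Real.pi * c / Real.pi = c := by
        field_simp
      rw [hval] at h3
      refine h3.congr' ?_
      filter_upwards [self_mem_nhdsWithin] with y hy
      have hy' : y ≠ 0 := hy
      rw [sincF, if_neg hy']
      rw [div_div, mul_comm y Real.pi]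
    rw [ContinuousAt, show sincF c 0 = c from if_pos rfl, ← nhdsNE_sup_pure]
    exact h2.sup (by simpa [show sincF c 0 = c from if_pos rfl] using
      (tendsto_pure_nhds (sincF c) 0))
  · have hcont : ContinuousAt (fun y : ℝ => Real.sin (Real.pi * c * y) / (Real.pi * y)) x := by
      apply ContinuousAt.div
      · fun_prop
      · fun_prop
      · simp [Real.pi_ne_zero, hx]
    refine hcont.congr ?_
    filter_upwards [isOpen_compl_singleton.mem_nhds (by simpa using hx : x ∈ ({(0:ℝ)}ᶜ))] with y hy
    rw [sincF, if_neg (show y ≠ 0 by simpa using hy)]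

lemma sincF_sq_le (c : ℝ) (hc : 0 < c) (x : ℝ) :
    (sincF c x) ^ 2 ≤ (c ^ 2 + (Real.pi)⁻¹ ^ 2) * (1 + x ^ 2)⁻¹ := by
  have hb1 : (sincF c x) ^ 2 ≤ c ^ 2 := by
    rcases eq_or_ne x 0 with rfl | hx
    · simp [sincF]
    · rw [sincF, if_neg hx, div_pow, div_le_iff₀ (by positivity)]
      calc Real.sin (Real.pi * c * x) ^ 2 ≤ (Real.pi * c * x) ^ 2 := by
            rw [← _root_.sq_abs (Real.sin _), ← _root_.sq_abs (Real.pi * c * x)]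
            exact pow_le_pow_left₀ (abs_nonneg _) (Real.abs_sin_le_abs) 2
        _ = c ^ 2 * (Real.pi * x) ^ 2 := by ring
  have hb2 : x ^ 2 * (sincF c x) ^ 2 ≤ (Real.pi)⁻¹ ^ 2 := by
    rcases eq_or_ne x 0 with rfl | hx
    · simp
      positivity
    · rw [sincF, if_neg hx, div_pow]
      have heq : x ^ 2 * (Real.sin (Real.pi * c * x) ^ 2 / (Real.pi * x) ^ 2)
          = Real.sin (Real.pi * c * x) ^ 2 * (Real.pi)⁻¹ ^ 2 := by
        field_simp
      rw [heq]
      have := Real.sin_sq_le_one (Real.pi * c * x)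
      nlinarith [sq_nonneg ((Real.pi : ℝ)⁻¹)]
  have h1x : (0:ℝ) < 1 + x ^ 2 := by positivity
  rw [← div_eq_mul_inv, le_div_iff₀ h1x]
  nlinarith

lemma integrable_sincF_mul (c : ℝ) (hc : 0 < c) (u v : ℝ) :
    Integrable (fun x : ℝ => sincF c (x - u) * sincF c (x - v)) := by
  set K : ℝ := c ^ 2 + (Real.pi)⁻¹ ^ 2 with hK
  have hK0 : 0 ≤ K := by positivity
  have hg : Integrable (fun x : ℝ =>
      (K/2) * ((1 + (x - u) ^ 2)⁻¹ + (1 + (x - v) ^ 2)⁻¹)) := by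
    apply Integrable.const_mul
    exact ((integrable_inv_one_add_sq.comp_sub_right u).add
      (integrable_inv_one_add_sq.comp_sub_right v))
  refine hg.mono' ?_ ?_
  · exact (((continuous_sincF c).comp (continuous_id.sub continuous_const)).mul
      ((continuous_sincF c).comp (continuous_id.sub continuous_const))).aestronglyMeasurable
  · filter_upwards with x
    have h1 := sincF_sq_le c hc (x - u)
    have h2 := sincF_sq_le c hc (x - v)
    have habs : |sincF c (x - u) * sincF c (x - v)|
        ≤ (sincF c (x - u) ^ 2 + sincF c (x - v) ^ 2) / 2 := by
      rw [abs_mul]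
      nlinarith [sq_nonneg (|sincF c (x-u)| - |sincF c (x-v)|), _root_.sq_abs (sincF c (x-u)),
        _root_.sq_abs (sincF c (x-v)), abs_nonneg (sincF c (x-u)), abs_nonneg (sincF c (x-v))]
    rw [Real.norm_eq_abs]
    calc |sincF c (x - u) * sincF c (x - v)| ≤ (sincF c (x-u)^2 + sincF c (x-v)^2)/2 := habs
      _ ≤ (K * (1 + (x-u)^2)⁻¹ + K * (1 + (x-v)^2)⁻¹)/2 := by linarith
      _ = (K/2) * ((1 + (x - u) ^ 2)⁻¹ + (1 + (x - v) ^ 2)⁻¹) := by ring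

section Key
variable (c t : ℝ)

/-- left endpoint (clamped) -/
noncomputable def AA (c ξ : ℝ) : ℝ := max (-(c/2)) (min (c/2) (ξ - c/2))
/-- right endpoint (clamped) -/
noncomputable def BB (c ξ : ℝ) : ℝ := min (c/2) (max (-(c/2)) (ξ + c/2))

/-- the band profile: convolution of modulated indicator with indicator -/
noncomputable def WW (c t ξ : ℝ) : ℂ :=
  ∫ η, (Set.Icc (-(c/2)) (c/2)).indicator
      (fun η : ℝ => Complex.exp (2 * Real.pi * Complex.I * η * t)) η
    * (Set.Icc (-(c/2)) (c/2)).indicator (fun _ : ℝ => (1:ℂ)) (ξ - η)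

lemma WW_eq (hc : 0 < c) (ξ : ℝ) :
    WW c t ξ = ∫ η in (AA c ξ)..(BB c ξ), Complex.exp (2 * Real.pi * Complex.I * η * t) := by
  have hd : 0 < c/2 := by linarith
  have hker : ∀ η : ℝ,
      (Set.Icc (-(c/2)) (c/2)).indicator
        (fun η : ℝ => Complex.exp (2 * Real.pi * Complex.I * η * t)) η
      * (Set.Icc (-(c/2)) (c/2)).indicator (fun _ : ℝ => (1:ℂ)) (ξ - η)
      = (Set.Icc (max (-(c/2)) (ξ - c/2)) (min (c/2) (ξ + c/2))).indicator
        (fun η : ℝ => Complex.exp (2 * Real.pi * Complex.I * η * t)) η := by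
    intro η
    have hmem : (η ∈ Set.Icc (max (-(c/2)) (ξ - c/2)) (min (c/2) (ξ + c/2)))
        ↔ (η ∈ Set.Icc (-(c/2)) (c/2) ∧ ξ - η ∈ Set.Icc (-(c/2)) (c/2)) := by
      simp only [Set.mem_Icc, max_le_iff, le_min_iff]
      constructor
      · rintro ⟨⟨h1, h2⟩, h3, h4⟩; exact ⟨⟨h1, h3⟩, by constructor <;> linarith⟩
      · rintro ⟨⟨h1, h2⟩, h3, h4⟩; exact ⟨⟨h1, by linarith⟩, h2, by linarith⟩
    by_cases h : η ∈ Set.Icc (max (-(c/2)) (ξ - c/2)) (min (c/2) (ξ + c/2))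
    · obtain ⟨h1, h2⟩ := hmem.mp h
      rw [Set.indicator_of_mem h, Set.indicator_of_mem h1, Set.indicator_of_mem h2, mul_one]
    · rw [Set.indicator_of_notMem h]
      rcases not_and_or.mp (by rw [← hmem]; exact h) with h' | h'
      · rw [Set.indicator_of_notMem h', zero_mul]
      · rw [Set.indicator_of_notMem h', mul_zero]
  unfold WW
  simp_rw [hker]
  rw [MeasureTheory.integral_indicator measurableSet_Icc]
  by_cases hle : max (-(c/2)) (ξ - c/2) ≤ min (c/2) (ξ + c/2)
  · have hA : AA c ξ = max (-(c/2)) (ξ - c/2) := by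
      unfold AA
      have : ξ - c/2 ≤ c/2 := le_trans (le_trans (le_max_right _ _) hle) (min_le_left _ _)
      rw [min_eq_right this]
    have hB : BB c ξ = min (c/2) (ξ + c/2) := by
      unfold BB
      have : -(c/2) ≤ ξ + c/2 := le_trans (le_trans (le_max_left _ _) hle) (min_le_right _ _)
      rw [max_eq_right this]
    rw [hA, hB, intervalIntegral.integral_of_le hle, integral_Icc_eq_integral_Ioc]
  · push_neg at hle
    have hAB : AA c ξ = BB c ξ := by
      rcases (min_lt_iff.mp hle) with h | h
      · rcases (lt_max_iff.mp h) with h' | h'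
        · linarith
        · -- c/2 < ξ - c/2, so ξ > c
          unfold AA BB
          rw [min_eq_left (le_of_lt h'), max_eq_right (by linarith : -(c/2) ≤ (c/2:ℝ)),
            max_eq_right (by linarith : -(c/2) ≤ ξ + c/2), min_eq_left (by linarith : (c/2:ℝ) ≤ ξ + c/2)]
      · rcases (lt_max_iff.mp h) with h' | h'
        · -- ξ + c/2 < -(c/2), so ξ < -c
          unfold AA BB
          rw [min_eq_right (by linarith : ξ - c/2 ≤ (c/2:ℝ)),
            max_eq_left (by linarith : ξ - c/2 ≤ -(c/2)),
            max_eq_left (le_of_lt h'), min_eq_right (by linarith : -(c/2) ≤ (c/2:ℝ))]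
        · linarith
    have hempty : Set.Icc (max (-(c/2)) (ξ - c/2)) (min (c/2) (ξ + c/2)) = ∅ :=
      Set.Icc_eq_empty (not_le.mpr hle)
    rw [hempty, hAB, intervalIntegral.integral_same]
    simp

lemma WW_zero (hc : 0 < c) : WW c t 0 = (sincF c t : ℂ) := by
  have hd : 0 < c/2 := by linarith
  rw [WW_eq c t hc 0]
  have hA : AA c 0 = -(c/2) := by
    unfold AA
    rw [zero_sub, min_eq_right (by linarith : -(c/2) ≤ (c/2:ℝ)), max_self]
  have hB : BB c 0 = c/2 := by
    unfold BB
    rw [zero_add, max_eq_right (by linarith : -(c/2) ≤ (c/2:ℝ)), min_self]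
  rw [hA, hB, cexp_integral_eq_sincF c hc t]

lemma continuous_WW (hc : 0 < c) : Continuous (WW c t) := by
  have hcf : Continuous (fun η : ℝ => Complex.exp (2 * Real.pi * Complex.I * η * t)) := by
    fun_prop
  have hP : Continuous (fun y : ℝ =>
      ∫ η in (0:ℝ)..y, Complex.exp (2 * Real.pi * Complex.I * η * t)) :=
    intervalIntegral.continuous_primitive
      (fun a b => (hcf.intervalIntegrable a b)) 0
  have hA : Continuous (AA c) := by
    unfold AA; fun_prop
  have hB : Continuous (BB c) := by
    unfold BB; fun_prop
  have hsplit : ∀ ξ, WW c t ξ =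
      (∫ η in (0:ℝ)..(BB c ξ), Complex.exp (2 * Real.pi * Complex.I * η * t))
      - ∫ η in (0:ℝ)..(AA c ξ), Complex.exp (2 * Real.pi * Complex.I * η * t) := by
    intro ξ
    rw [WW_eq c t hc ξ]
    rw [← intervalIntegral.integral_add_adjacent_intervals
      (hcf.intervalIntegrable 0 (AA c ξ)) (hcf.intervalIntegrable (AA c ξ) (BB c ξ))]
    ring
  have : Continuous (fun ξ =>
      (∫ η in (0:ℝ)..(BB c ξ), Complex.exp (2 * Real.pi * Complex.I * η * t))
      - ∫ η in (0:ℝ)..(AA c ξ), Complex.exp (2 * Real.pi * Complex.I * η * t)) :=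
    (hP.comp hB).sub (hP.comp hA)
  exact continuous_congr (fun ξ => (hsplit ξ).symm) |>.mp this

lemma integrable_WW (hc : 0 < c) : Integrable (WW c t) := by
  apply (continuous_WW c t hc).integrable_of_hasCompactSupport
  apply HasCompactSupport.intro (isCompact_Icc (a := -c) (b := c))
  intro ξ hξ
  simp only [Set.mem_Icc, not_and_or, not_le] at hξ
  rw [WW_eq c t hc ξ]
  have hAB : AA c ξ = BB c ξ := by
    rcases hξ with h | h
    · -- ξ < -c
      unfold AA BB
      rw [min_eq_right (by linarith : ξ - c/2 ≤ (c/2:ℝ)),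
        max_eq_left (by linarith : ξ - c/2 ≤ -(c/2)),
        max_eq_left (by linarith : ξ + c/2 ≤ -(c/2)),
        min_eq_right (by linarith : -(c/2) ≤ (c/2:ℝ))]
    · -- c < ξ
      unfold AA BB
      rw [min_eq_left (by linarith : (c/2:ℝ) ≤ ξ - c/2),
        max_eq_right (by linarith : -(c/2) ≤ (c/2:ℝ)),
        max_eq_right (by linarith : -(c/2) ≤ ξ + c/2),
        min_eq_left (by linarith : (c/2:ℝ) ≤ ξ + c/2)]
  rw [hAB, intervalIntegral.integral_same]

end Key

-- helper: indicator-form of the sinc integral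
lemma indicator_integral_sincF (c : ℝ) (hc : 0 < c) (s : ℝ) :
    (∫ η : ℝ, (Set.Icc (-(c/2)) (c/2)).indicator
      (fun η : ℝ => Complex.exp (2 * Real.pi * Complex.I * η * s)) η) = (sincF c s : ℂ) := by
  rw [MeasureTheory.integral_indicator measurableSet_Icc, integral_Icc_eq_integral_Ioc,
    ← intervalIntegral.integral_of_le (by linarith : -(c/2) ≤ c/2),
    cexp_integral_eq_sincF c hc s]

lemma fourier_WW (c t : ℝ) (hc : 0 < c) (x : ℝ) :
    𝓕 (WW c t) x = ((sincF c x * sincF c (x - t) : ℝ) : ℂ) := by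
  have hd : (0:ℝ) < c/2 := by linarith
  set S : Set ℝ := Set.Icc (-(c/2)) (c/2) with hS
  have hmeasS : MeasurableSet S := measurableSet_Icc
  -- the double integrand
  set F : ℝ → ℝ → ℂ := fun ξ η =>
    Complex.exp ((-2 * Real.pi * ξ * x : ℝ) * Complex.I)
      * (S.indicator (fun η : ℝ => Complex.exp (2 * Real.pi * Complex.I * η * t)) η
        * S.indicator (fun _ : ℝ => (1:ℂ)) (ξ - η)) with hF
  have hFnorm : ∀ ξ η, ‖F ξ η‖ ≤ (Set.Icc (-c) c ×ˢ S).indicator (fun _ => (1:ℝ)) (ξ, η) := by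
    intro ξ η
    rw [hF]
    simp only
    rw [norm_mul, norm_mul, Complex.norm_exp_ofReal_mul_I, one_mul]
    by_cases hη : η ∈ S
    · by_cases hξ : ξ ∈ Set.Icc (-c) c
      · rw [Set.indicator_of_mem (Set.mk_mem_prod hξ hη)]
        have h1 : ‖S.indicator (fun η : ℝ => Complex.exp (2 * Real.pi * Complex.I * η * t)) η‖ ≤ 1 := by
          rw [Set.indicator_of_mem hη]
          rw [show (2 * Real.pi * Complex.I * η * t) = ((2 * Real.pi * η * t : ℝ) * Complex.I) by
            push_cast; ring]
          rw [Complex.norm_exp_ofReal_mul_I]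
        have h2 : ‖S.indicator (fun _ : ℝ => (1:ℂ)) (ξ - η)‖ ≤ 1 := by
          by_cases h : (ξ - η) ∈ S
          · rw [Set.indicator_of_mem h]; simp
          · rw [Set.indicator_of_notMem h]; simp
        calc ‖_‖ * ‖_‖ ≤ 1 * 1 := mul_le_mul h1 h2 (norm_nonneg _) zero_le_one
          _ = 1 := by norm_num
      · -- ξ ∉ [-c,c] but η ∈ S ⇒ ξ - η ∉ S
        have hξη : (ξ - η) ∉ S := by
          simp only [hS, Set.mem_Icc, not_and_or, not_le] at hξ ⊢
          obtain ⟨hη1, hη2⟩ := (Set.mem_Icc.mp hη)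
          rcases hξ with h | h
          · left; linarith
          · right; linarith
        rw [Set.indicator_of_notMem hξη]
        simp only [norm_zero, mul_zero]
        exact Set.indicator_nonneg (fun _ _ => zero_le_one) _
    · rw [Set.indicator_of_notMem hη]
      simp only [norm_zero, zero_mul, mul_zero]
      exact Set.indicator_nonneg (fun _ _ => zero_le_one) _
  have hFmeas : AEStronglyMeasurable (Function.uncurry F) (volume.prod volume) := by
    rw [hF]
    apply AEStronglyMeasurable.mul
    · apply Continuous.aestronglyMeasurable
      fun_prop
    · apply AEStronglyMeasurable.mul
      · exact ((Measurable.indicator (by fun_prop) hmeasS).comp measurable_snd).aestronglyMeasurable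
      · exact ((Measurable.indicator measurable_const hmeasS).comp
          (measurable_fst.sub measurable_snd)).aestronglyMeasurable
  have hFint : Integrable (Function.uncurry F) (volume.prod volume) := by
    refine Integrable.mono' (g := fun p : ℝ × ℝ => (Set.Icc (-c) c ×ˢ S).indicator (fun _ => (1:ℝ)) p) ?_ hFmeas ?_
    · rw [MeasureTheory.integrable_indicator_iff (measurableSet_Icc.prod hmeasS)]
      exact integrableOn_const ((isCompact_Icc.prod isCompact_Icc).measure_lt_top.ne)
    · filter_upwards with p
      exact hFnorm p.1 p.2
  -- compute the Fourier transform
  rw [Real.fourier_real_eq_integral_exp_smul]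
  have hstep1 : (∫ ξ : ℝ, Complex.exp ((-2 * Real.pi * ξ * x : ℝ) * Complex.I) • WW c t ξ)
      = ∫ ξ : ℝ, ∫ η : ℝ, F ξ η := by
    congr 1; ext ξ
    rw [smul_eq_mul, WW, ← MeasureTheory.integral_const_mul]
  rw [hstep1, MeasureTheory.integral_integral_swap hFint]
  -- inner integral in ξ, for fixed η
  have hinner : ∀ η : ℝ, (∫ ξ : ℝ, F ξ η)
      = S.indicator (fun η : ℝ => Complex.exp (2 * Real.pi * Complex.I * η * t)) η
        * (Complex.exp ((-2 * Real.pi * η * x : ℝ) * Complex.I) * (sincF c x : ℂ)) := by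
    intro η
    have hshift : (∫ ξ : ℝ, F ξ η) = ∫ ζ : ℝ, F (ζ + η) η := by
      rw [integral_add_right_eq_self (fun ξ => F ξ η) η]
    rw [hshift, hF]
    simp only [add_sub_cancel_right]
    have hre : ∀ ζ : ℝ, Complex.exp ((-2 * Real.pi * (ζ + η) * x : ℝ) * Complex.I)
        = Complex.exp ((-2 * Real.pi * η * x : ℝ) * Complex.I)
          * Complex.exp ((-2 * Real.pi * ζ * x : ℝ) * Complex.I) := by
      intro ζ
      rw [← Complex.exp_add]
      congr 1
      push_cast; ring
    have : (∫ ζ : ℝ, Complex.exp ((-2 * Real.pi * (ζ + η) * x : ℝ) * Complex.I)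
        * (S.indicator (fun η : ℝ => Complex.exp (2 * Real.pi * Complex.I * η * t)) η
          * S.indicator (fun _ : ℝ => (1:ℂ)) ζ))
        = S.indicator (fun η : ℝ => Complex.exp (2 * Real.pi * Complex.I * η * t)) η
          * (Complex.exp ((-2 * Real.pi * η * x : ℝ) * Complex.I)
            * ∫ ζ : ℝ, S.indicator (fun ζ : ℝ => Complex.exp ((-2 * Real.pi * ζ * x : ℝ) * Complex.I)) ζ) := by
      rw [← MeasureTheory.integral_const_mul, ← MeasureTheory.integral_const_mul]
      congr 1; ext ζ
      rw [hre ζ]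
      by_cases h : ζ ∈ S
      · rw [Set.indicator_of_mem h, Set.indicator_of_mem h, mul_one]
        ring
      · rw [Set.indicator_of_notMem h, Set.indicator_of_notMem h]
        ring
    rw [this]
    congr 2
    have hcast : ∀ ζ : ℝ, Complex.exp ((-2 * Real.pi * ζ * x : ℝ) * Complex.I)
        = Complex.exp (2 * Real.pi * Complex.I * ζ * (-x : ℝ)) := by
      intro ζ; congr 1; push_cast; ring
    simp_rw [hcast]
    rw [indicator_integral_sincF c hc (-x), sincF_even c x]
  simp_rw [hinner]
  -- outer integral in η
  have houter : (∫ η : ℝ, S.indicator (fun η : ℝ => Complex.exp (2 * Real.pi * Complex.I * η * t)) η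
      * (Complex.exp ((-2 * Real.pi * η * x : ℝ) * Complex.I) * (sincF c x : ℂ)))
      = (sincF c x : ℂ) * ∫ η : ℝ, S.indicator
          (fun η : ℝ => Complex.exp (2 * Real.pi * Complex.I * η * (t - x))) η := by
    rw [← MeasureTheory.integral_const_mul]
    congr 1; ext η
    by_cases h : η ∈ S
    · rw [Set.indicator_of_mem h, Set.indicator_of_mem h]
      rw [show (2 * Real.pi * Complex.I * (η:ℂ) * ((t:ℂ) - (x:ℂ)))
        = (2 * Real.pi * Complex.I * η * t) + ((-2 * Real.pi * η * x : ℝ):ℂ) * Complex.I by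
          push_cast; ring]
      rw [Complex.exp_add]
      ring
    · rw [Set.indicator_of_notMem h, Set.indicator_of_notMem h]
      ring
  rw [houter, hS]
  rw [show (fun η : ℝ => Complex.exp (2 * Real.pi * Complex.I * (η:ℂ) * ((t:ℂ) - (x:ℂ))))
    = (fun η : ℝ => Complex.exp (2 * Real.pi * Complex.I * (η:ℂ) * ((t - x : ℝ):ℂ))) by
      funext η; congr 1; push_cast; ring]
  rw [indicator_integral_sincF c hc (t - x)]
  rw [show t - x = -(x - t) by ring, sincF_even]
  push_cast
  ring

lemma sincF_mul_integral (c : ℝ) (hc : 0 < c) (t : ℝ) :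
    (∫ x : ℝ, sincF c x * sincF c (x - t)) = sincF c t := by
  have hFw : 𝓕 (WW c t) = fun x => ((sincF c x * sincF c (x - t) : ℝ) : ℂ) := by
    ext x; exact fourier_WW c t hc x
  have hint2 : Integrable (𝓕 (WW c t)) := by
    rw [hFw]
    have : Integrable (fun x : ℝ => sincF c x * sincF c (x - t)) := by
      have := integrable_sincF_mul c hc 0 t
      simpa using this
    exact this.ofReal
  have hinv := (integrable_WW c t hc).fourierInv_fourier_eq hint2
    ((continuous_WW c t hc).continuousAt (x := 0))
  rw [WW_zero c t hc] at hinv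
  have hinv0 : 𝓕⁻ (𝓕 (WW c t)) 0 = ∫ x : ℝ, 𝓕 (WW c t) x := by
    rw [Real.fourierInv_eq]
    simp
  rw [hinv0, hFw] at hinv
  simp only at hinv
  apply Complex.ofReal_injective
  rw [← hinv]
  rw [show (fun x : ℝ => ((sincF c x * sincF c (x - t) : ℝ) : ℂ))
    = (fun x : ℝ => ((RCLike.ofReal (K := ℂ)) (sincF c x * sincF c (x - t)))) from rfl]
  rw [_root_.integral_ofReal]
  rfl

lemma sincF_mul_integral' (c : ℝ) (hc : 0 < c) (u v : ℝ) :
    (∫ x : ℝ, sincF c (x - u) * sincF c (x - v)) = sincF c (u - v) := by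
  have hshift : (∫ x : ℝ, sincF c (x - u) * sincF c (x - v))
      = ∫ x : ℝ, sincF c x * sincF c (x - (v - u)) := by
    rw [← integral_sub_right_eq_self (fun x => sincF c x * sincF c (x - (v - u))) u]
    congr 1; ext x
    congr 2
    ring
  rw [hshift, sincF_mul_integral c hc (v - u), show v - u = -(u - v) by ring, sincF_even]

/-- If the coefficient vector `a` satisfies the two-dimensional BLML
constraints `Σⱼ aⱼ s^x_{ij} s^y_{ij} = n / aᵢ` for all `i`, then the joint
BLML estimator
`f̂_{XY}(x,y) = ((1/n) Σᵢ aᵢ sinc_{fc}(x − xᵢ) sinc_{fc}(y − yᵢ))²`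
integrates to one, i.e. it is a probability density on `ℝ²`. -/
theorem blml_joint_estimator_is_density
    (fc : ℝ) (hfc : 0 < fc) (n : ℕ) (hn : 1 ≤ n)
    (xs ys : Fin n → ℝ) (a : Fin n → ℝ) (ha : ∀ i, a i ≠ 0)
    (hconstraint : ∀ i,
      ∑ j, a j * (sincF fc (xs i - xs j) * sincF fc (ys i - ys j)) = n / a i) :
    ∫ p : ℝ × ℝ,
      ((1 / n : ℝ) * ∑ i, a i * sincF fc (p.1 - xs i) * sincF fc (p.2 - ys i)) ^ 2
      = 1 := by
  have hn0 : (n : ℝ) ≠ 0 := Nat.cast_ne_zero.mpr (by omega)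
  have hvol : (volume : Measure (ℝ × ℝ)) = (volume : Measure ℝ).prod volume :=
    MeasureTheory.Measure.volume_eq_prod ℝ ℝ
  -- the expanded integrand
  set T : Fin n → Fin n → ℝ × ℝ → ℝ := fun i j p =>
    ((1/n:ℝ)^2 * (a i * a j)) *
      ((sincF fc (p.1 - xs i) * sincF fc (p.1 - xs j))
        * (sincF fc (p.2 - ys i) * sincF fc (p.2 - ys j))) with hT
  have hexpand : ∀ p : ℝ × ℝ,
      ((1 / n : ℝ) * ∑ i, a i * sincF fc (p.1 - xs i) * sincF fc (p.2 - ys i)) ^ 2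
      = ∑ i, ∑ j, T i j p := by
    intro p
    rw [mul_pow, sq (∑ i, a i * sincF fc (p.1 - xs i) * sincF fc (p.2 - ys i)),
      Finset.sum_mul_sum, Finset.mul_sum]
    refine Finset.sum_congr rfl fun i _ => ?_
    rw [Finset.mul_sum]
    refine Finset.sum_congr rfl fun j _ => ?_
    rw [hT]
    ring
  have hTint : ∀ i j, Integrable (T i j) (volume : Measure (ℝ × ℝ)) := by
    intro i j
    rw [hT, hvol]
    exact (((integrable_sincF_mul fc hfc (xs i) (xs j)).mul_prod
      (integrable_sincF_mul fc hfc (ys i) (ys j)))).const_mul _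
  have hTval : ∀ i j, (∫ p : ℝ × ℝ, T i j p)
      = ((1/n:ℝ)^2 * (a i * a j)) * (sincF fc (xs i - xs j) * sincF fc (ys i - ys j)) := by
    intro i j
    rw [hT]
    simp only
    rw [MeasureTheory.integral_const_mul, hvol,
      MeasureTheory.integral_prod_mul
        (f := fun x : ℝ => sincF fc (x - xs i) * sincF fc (x - xs j))
        (g := fun y : ℝ => sincF fc (y - ys i) * sincF fc (y - ys j)),
      sincF_mul_integral' fc hfc (xs i) (xs j), sincF_mul_integral' fc hfc (ys i) (ys j)]
  calc ∫ p : ℝ × ℝ,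
        ((1 / n : ℝ) * ∑ i, a i * sincF fc (p.1 - xs i) * sincF fc (p.2 - ys i)) ^ 2
      = ∫ p : ℝ × ℝ, ∑ i, ∑ j, T i j p := by
        congr 1; funext p; exact hexpand p
    _ = ∑ i, ∑ j, ∫ p : ℝ × ℝ, T i j p := by
        rw [MeasureTheory.integral_finset_sum _ (fun i _ =>
          integrable_finset_sum _ (fun j _ => hTint i j))]
        exact Finset.sum_congr rfl fun i _ =>
          MeasureTheory.integral_finset_sum _ (fun j _ => hTint i j)
    _ = ∑ i : Fin n, (1/n:ℝ)^2 * (a i * ((n:ℝ) / a i)) := by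
        refine Finset.sum_congr rfl fun i _ => ?_
        rw [← hconstraint i, Finset.mul_sum, Finset.mul_sum]
        refine Finset.sum_congr rfl fun j _ => ?_
        rw [hTval i j]
        ring
    _ = ∑ i : Fin n, (1/n:ℝ)^2 * n := by
        refine Finset.sum_congr rfl fun i _ => ?_
        rw [mul_div_cancel₀ (n:ℝ) (ha i)]
    _ = 1 := by
        rw [Finset.sum_const, Finset.card_univ, Fintype.card_fin, nsmul_eq_mul]
        field_simp
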